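/- For every 2×2 complex unitary matrix U, the number max_{j∈{0,1}} (∑_{i∈{0,1}} |U_{ij}|)² − 1 is the maximum of the l1-coherence gain C_{l1}(UρU†) − C_{l1}(ρ) over all 2×2 density matrices ρ: it is an upper bound on the gain for every density matrix, and it is attained at the pure incoherent state E_{jj} for the maximizing column index j. -/

import Mathlib

open Matrix
open scoped ComplexOrder

noncomputable def l1Coherence {n : ℕ} (A : Matrix (Fin n) (Fin n) ℂ) : ℝ :=
  ∑ i, ∑ j, if i ≠ j then ‖A i j‖ else 0

lemma l1two (A : Matrix (Fin 2) (Fin 2) ℂ) :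
    l1Coherence A = ‖A 0 1‖ + ‖A 1 0‖ := by
  simp [l1Coherence, Fin.sum_univ_two]

lemma sum_sq_abs (x y : ℂ) (h : (starRingEnd ℂ) x * x + (starRingEnd ℂ) y * y = 1) :
    ‖x‖ ^ 2 + ‖y‖ ^ 2 = 1 := by
  have h2 := congrArg Complex.re h
  simp [Complex.mul_re] at h2
  rw [Complex.sq_norm, Complex.sq_norm, Complex.normSq_apply, Complex.normSq_apply]
  linarith

/-- For a 2×2 unitary `U`, the quantity `max_j (∑_i |U i j|)² − 1` is an upper
bound on the `l1`-coherence gain over all density matrices, and it is attained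
at a pure incoherent state `E_jj`. -/
theorem coherence_power_qubit_formula
    (U : Matrix (Fin 2) (Fin 2) ℂ) (hU : U ∈ Matrix.unitaryGroup (Fin 2) ℂ) :
    (∀ ρ : Matrix (Fin 2) (Fin 2) ℂ, ρ.PosSemidef → ρ.trace = 1 →
      l1Coherence (U * ρ * Uᴴ) - l1Coherence ρ ≤
        max ((∑ i, ‖U i 0‖) ^ 2) ((∑ i, ‖U i 1‖) ^ 2) - 1) ∧
    (∃ j : Fin 2,
      l1Coherence (U * Matrix.single j j 1 * Uᴴ) -
          l1Coherence (Matrix.single j j 1) =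
        max ((∑ i, ‖U i 0‖) ^ 2) ((∑ i, ‖U i 1‖) ^ 2) - 1) := by
  have hUr : U * Uᴴ = 1 := hU.2
  have hUl : Uᴴ * U = 1 := hU.1
  have hr01 := congrFun (congrFun hUr 0) 1
  have hc00 := congrFun (congrFun hUl 0) 0
  have hc11 := congrFun (congrFun hUl 1) 1
  have hr00 := congrFun (congrFun hUr 0) 0
  have hr11 := congrFun (congrFun hUr 1) 1
  simp only [Matrix.mul_apply, Fin.sum_univ_two, Matrix.one_apply,
    Matrix.conjTranspose_apply, ne_eq, Fin.zero_eq_one_iff, Nat.succ_ne_self,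
    if_true, if_false, Matrix.one_apply_eq, Matrix.one_apply_ne, one_ne_zero,
    Fin.one_eq_zero_iff, reduceIte, Complex.star_def] at hr01 hc00 hc11 hr00 hr11
  set a := U 0 0 with hadef
  set b := U 0 1 with hbdef
  set c := U 1 0 with hcdef
  set d := U 1 1 with hddef
  set ca := ‖a‖ with hcadef
  set cb := ‖b‖ with hcbdef
  set cc := ‖c‖ with hccdef
  set cd := ‖d‖ with hcddef
  -- abs relations
  have habs : ca * cc = cb * cd := by
    have h1 : a * (starRingEnd ℂ) c = -(b * (starRingEnd ℂ) d) := by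
      linear_combination hr01
    calc ca * cc = ‖a * (starRingEnd ℂ) c‖ := by
          rw [norm_mul, Complex.norm_conj]
      _ = ‖b * (starRingEnd ℂ) d‖ := by rw [h1, norm_neg]
      _ = cb * cd := by rw [norm_mul, Complex.norm_conj]
  have hnac : ca ^ 2 + cc ^ 2 = 1 := sum_sq_abs a c hc00
  have hnbd : cb ^ 2 + cd ^ 2 = 1 := sum_sq_abs b d hc11
  have hnab : ca ^ 2 + cb ^ 2 = 1 := sum_sq_abs a b (by linear_combination hr00)
  have hncd : cc ^ 2 + cd ^ 2 = 1 := sum_sq_abs c d (by linear_combination hr11)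
  have hca0 : 0 ≤ ca := norm_nonneg a
  have hcb0 : 0 ≤ cb := norm_nonneg b
  have hcc0 : 0 ≤ cc := norm_nonneg c
  have hcd0 : 0 ≤ cd := norm_nonneg d
  have hsum0 : ∑ i, ‖U i 0‖ = ca + cc := by rw [Fin.sum_univ_two]
  have hsum1 : ∑ i, ‖U i 1‖ = cb + cd := by rw [Fin.sum_univ_two]
  have hmax : max ((∑ i, ‖U i 0‖) ^ 2) ((∑ i, ‖U i 1‖) ^ 2)
      = 1 + 2 * (ca * cc) := by
    rw [hsum0, hsum1]
    have e0 : (ca + cc) ^ 2 = 1 + 2 * (ca * cc) := by nlinarith [hnac]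
    have e1 : (cb + cd) ^ 2 = 1 + 2 * (ca * cc) := by nlinarith [hnbd, habs]
    rw [e0, e1, max_self]
  have hcs : ca * cd + cb * cc ≤ 1 := by
    nlinarith [sq_nonneg (ca - cd), sq_nonneg (cb - cc)]
  constructor
  · intro ρ hρ htr
    have heq : ρᴴ = ρ := hρ.1
    have hz10 : ρ 1 0 = (starRingEnd ℂ) (ρ 0 1) := by
      have h := congrFun (congrFun heq 1) 0
      simpa [Matrix.conjTranspose_apply] using h.symm
    have h00 : (0 : ℂ) ≤ ρ 0 0 := by
      have h := hρ.dotProduct_mulVec_nonneg (Pi.single 0 1)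
      simpa [dotProduct, Matrix.mulVec, Fin.sum_univ_two, Pi.single_apply] using h
    have h11 : (0 : ℂ) ≤ ρ 1 1 := by
      have h := hρ.dotProduct_mulVec_nonneg (Pi.single 1 1)
      simpa [dotProduct, Matrix.mulVec, Fin.sum_univ_two, Pi.single_apply] using h
    set p := (ρ 0 0).re with hpdef
    set q := (ρ 1 1).re with hqdef
    set z := ρ 0 1 with hzdef
    set cz := ‖z‖ with hczdef
    have hp : 0 ≤ p := by simpa using (Complex.le_def.mp h00).1
    have hq : 0 ≤ q := by simpa using (Complex.le_def.mp h11).1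
    have h00' : ρ 0 0 = (p : ℂ) :=
      Complex.ext (by simp [hpdef]) (by simpa using ((Complex.le_def.mp h00).2).symm)
    have h11' : ρ 1 1 = (q : ℂ) :=
      Complex.ext (by simp [hqdef]) (by simpa using ((Complex.le_def.mp h11).2).symm)
    have hpq : p + q = 1 := by
      have h := congrArg Complex.re htr
      simpa [Matrix.trace_fin_two, h00', h11'] using h
    have hX : (U * ρ * Uᴴ) 0 1 =
        a * (starRingEnd ℂ) c * ((p : ℂ) - q) + a * (starRingEnd ℂ) d * z
          + b * (starRingEnd ℂ) c * (starRingEnd ℂ) z := by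
      simp only [Matrix.mul_apply, Fin.sum_univ_two, Matrix.conjTranspose_apply,
        Complex.star_def]
      rw [hz10, h00', h11', ← hadef, ← hbdef, ← hcdef, ← hddef, ← hzdef]
      linear_combination (q : ℂ) * hr01
    have hXb : ‖(U * ρ * Uᴴ) 0 1‖ ≤
        ca * cc * |p - q| + ca * cd * cz + cb * cc * cz := by
      rw [hX]
      have e1 : ‖a * (starRingEnd ℂ) c * ((p : ℂ) - q)‖ = ca * cc * |p - q| := by
        rw [norm_mul, norm_mul, Complex.norm_conj, ← Complex.ofReal_sub,
          Complex.norm_real, Real.norm_eq_abs]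
      have e2 : ‖a * (starRingEnd ℂ) d * z‖ = ca * cd * cz := by
        rw [norm_mul, norm_mul, Complex.norm_conj]
      have e3 : ‖b * (starRingEnd ℂ) c * (starRingEnd ℂ) z‖ = cb * cc * cz := by
        rw [norm_mul, norm_mul, Complex.norm_conj, Complex.norm_conj]
      calc ‖a * (starRingEnd ℂ) c * ((p : ℂ) - q) + a * (starRingEnd ℂ) d * z
              + b * (starRingEnd ℂ) c * (starRingEnd ℂ) z‖
          ≤ ‖a * (starRingEnd ℂ) c * ((p : ℂ) - q) + a * (starRingEnd ℂ) d * z‖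
              + ‖b * (starRingEnd ℂ) c * (starRingEnd ℂ) z‖ :=
            norm_add_le _ _
        _ ≤ ‖a * (starRingEnd ℂ) c * ((p : ℂ) - q)‖
              + ‖a * (starRingEnd ℂ) d * z‖
              + ‖b * (starRingEnd ℂ) c * (starRingEnd ℂ) z‖ := by
            have := norm_add_le (a * (starRingEnd ℂ) c * ((p : ℂ) - q))
              (a * (starRingEnd ℂ) d * z)
            linarith
        _ = ca * cc * |p - q| + ca * cd * cz + cb * cc * cz := by rw [e1, e2, e3]
    have hHerm2 : (U * ρ * Uᴴ)ᴴ = U * ρ * Uᴴ := by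
      simp [Matrix.conjTranspose_mul, Matrix.mul_assoc, heq]
    have h10 : (U * ρ * Uᴴ) 1 0 = (starRingEnd ℂ) ((U * ρ * Uᴴ) 0 1) := by
      have h := congrFun (congrFun hHerm2 1) 0
      simpa [Matrix.conjTranspose_apply] using h.symm
    have hcρ : l1Coherence ρ = 2 * cz := by
      rw [l1two, hz10, Complex.norm_conj, ← hzdef, ← hczdef]; ring
    have hcU : l1Coherence (U * ρ * Uᴴ) = 2 * ‖(U * ρ * Uᴴ) 0 1‖ := by
      rw [l1two, h10, Complex.norm_conj]; ring
    rw [hcρ, hcU, hmax]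
    have hpq1 : |p - q| ≤ 1 := abs_le.mpr ⟨by linarith, by linarith⟩
    have hcz0 : 0 ≤ cz := norm_nonneg z
    have t1 : ca * cc * |p - q| ≤ ca * cc :=
      calc ca * cc * |p - q| ≤ ca * cc * 1 :=
            mul_le_mul_of_nonneg_left hpq1 (mul_nonneg hca0 hcc0)
        _ = ca * cc := mul_one _
    have t2 : ca * cd * cz + cb * cc * cz ≤ cz := by
      have := mul_le_mul_of_nonneg_right hcs hcz0
      linarith [this]
    linarith [hXb, t1, t2]
  · refine ⟨0, ?_⟩
    have hE : l1Coherence (Matrix.single (0 : Fin 2) 0 (1 : ℂ)) = 0 := by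
      rw [l1two]
      simp [Matrix.single, Matrix.of_apply]
    have h01 : (U * Matrix.single (0 : Fin 2) 0 (1 : ℂ) * Uᴴ : Matrix (Fin 2) (Fin 2) ℂ) 0 1
        = a * (starRingEnd ℂ) c := by
      simp [Matrix.mul_apply, Fin.sum_univ_two, Matrix.conjTranspose_apply,
        Matrix.single, Matrix.of_apply, Complex.star_def, hadef, hcdef]
    have h10 : (U * Matrix.single (0 : Fin 2) 0 (1 : ℂ) * Uᴴ : Matrix (Fin 2) (Fin 2) ℂ) 1 0
        = c * (starRingEnd ℂ) a := by
      simp [Matrix.mul_apply, Fin.sum_univ_two, Matrix.conjTranspose_apply,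
        Matrix.single, Matrix.of_apply, Complex.star_def, hadef, hcdef]
    rw [l1two, h01, h10, hE, hmax, norm_mul, norm_mul, Complex.norm_conj,
      Complex.norm_conj, ← hcadef, ← hccdef]
    ring
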